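/- Suppose the loss Λ satisfies: for every x ∈ A_X there exists x̂ with Λ(x, x̂) = 0. Then the expected normalized loss of the Bayes-optimal causal filter is bounded by E[(1/n)Σ_{t=1}^n Λ(X_t, X̂_t^opt(Z^t))] ≤ √2 · |Π^{-T}|_max · |A_X| · Λ_max · √((1/n)·I(X^n; Z^n)), where I denotes mutual information. -/

import Mathlib

open Finset Matrix
open scoped Classical

noncomputable section

/-- Joint law of `(X^n, Z^n)` when the source has law `pX` and the channel is a
DMC with matrix `K` (`K x z = P(Z_t = z | X_t = x)`). -/
def dmcJoint {n : ℕ} {α : Type} [Fintype α]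
    (pX : (Fin n → α) → ℝ) (K : Matrix α α ℝ) (x z : Fin n → α) : ℝ :=
  pX x * ∏ t, K (x t) (z t)

/-- Marginal law of `Z^n`. -/
def zMarg {n : ℕ} {α : Type} [Fintype α]
    (pX : (Fin n → α) → ℝ) (K : Matrix α α ℝ) (z : Fin n → α) : ℝ :=
  ∑ x : Fin n → α, dmcJoint pX K x z

/-- Probability of an event under the joint law. -/
def probE {n : ℕ} {α : Type} [Fintype α]
    (pX : (Fin n → α) → ℝ) (K : Matrix α α ℝ)
    (E : (Fin n → α) → (Fin n → α) → Prop) : ℝ :=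
  ∑ x : Fin n → α, ∑ z : Fin n → α, if E x z then dmcJoint pX K x z else 0

/-- Conditional law, under the joint law `Q` of a `Z`-sequence, of the `t`-th
coordinate given the coordinates `s` with `s + d ≤ t` (i.e. given `Z^{t-d}`;
`d = 1` is the causal conditional given `Z^{t-1}`). -/
def condDelay {n : ℕ} {α : Type} [Fintype α]
    (Q : (Fin n → α) → ℝ) (d : ℕ) (t : Fin n) (z : Fin n → α) (b : α) : ℝ :=
  (∑ z' : Fin n → α,
      if (∀ s : Fin n, (s : ℕ) + d ≤ (t : ℕ) → z' s = z s) ∧ z' t = b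
      then Q z' else 0) /
  (∑ z' : Fin n → α,
      if ∀ s : Fin n, (s : ℕ) + d ≤ (t : ℕ) → z' s = z s then Q z' else 0)

/-- KL divergence between two distributions on a finite type. -/
def klDiv {β : Type} [Fintype β] (P Q : β → ℝ) : ℝ :=
  ∑ b, P b * Real.log (P b / Q b)

/-- Maximal absolute entry of a matrix. -/
def matMaxAbs {α : Type} [Fintype α] [Nonempty α] (M : Matrix α α ℝ) : ℝ :=
  ⨆ p : α × α, |M p.1 p.2|

/-- The filter `X̂_B(F(q, K, z_t))`, i.e. the Bayes response (computed by `XB`)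
to `K(·, z_t) ⊙ (K^{-T} q)`, which is `P_{X_t | ⋯}` up to positive
normalization. -/
def hadFilter {α : Type} [Fintype α]
    (K : Matrix α α ℝ) (XB : (α → ℝ) → α) (q : α → ℝ) (zt : α) : α :=
  XB (fun a => K a zt * Matrix.mulVec (K⁻¹)ᵀ q a)

/-- Mutual information `I(X^n; Z^n)` under the DMC joint law. -/
def mutInfo {n : ℕ} {α : Type} [Fintype α]
    (pX : (Fin n → α) → ℝ) (K : Matrix α α ℝ) : ℝ :=
  ∑ x : Fin n → α, ∑ z : Fin n → α,
    dmcJoint pX K x z * Real.log (dmcJoint pX K x z / (pX x * zMarg pX K z))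

/-- mutual-information upper bound on the Bayes-optimal causal
filtering performance. If for every `x` there is `x̂` with `Λ(x, x̂) = 0`, then
`E[(1/n) ∑_t Λ(X_t, X̂_t^opt(Z^t))] ≤ √2 |K^{-T}|_max |A_X| Λmax √((1/n) I(X^n;Z^n))`. -/
-- D q p = derivative of ψ
private def Dfun (q p : ℝ) : ℝ :=
  2 * (Real.log p - Real.log q) - 3 * ((p - q) * (p + 5 * q)) / (p + 2 * q) ^ 2

private lemma hasDerivAt_Dfun (q : ℝ) (hq : 0 < q) (p : ℝ) (hp : 0 < p) :
    HasDerivAt (Dfun q) (2 / p - 54 * q ^ 2 / (p + 2 * q) ^ 3) p := by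
  have hpq : p + 2 * q ≠ 0 := by positivity
  have h1 : HasDerivAt (fun p : ℝ => 2 * (Real.log p - Real.log q)) (2 * p⁻¹) p :=
    (((Real.hasDerivAt_log (ne_of_gt hp)).sub_const (Real.log q))).const_mul 2
  have hg : HasDerivAt (fun p : ℝ => 3 * ((p - q) * (p + 5 * q)))
      (3 * (1 * (p + 5 * q) + (p - q) * 1)) p :=
    (((hasDerivAt_id p).sub_const q).mul ((hasDerivAt_id p).add_const (5 * q))).const_mul 3
  have hh : HasDerivAt (fun p : ℝ => (p + 2 * q) ^ 2) (2 * (p + 2 * q) ^ 1 * 1) p :=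
    ((hasDerivAt_id p).add_const (2 * q)).pow 2
  have hdiv := hg.div hh (by positivity)
  have := h1.sub hdiv
  refine HasDerivAt.congr_deriv (f := Dfun q) this ?_
  field_simp
  ring

private lemma Dfun_mono (q : ℝ) (hq : 0 < q) : MonotoneOn (Dfun q) (Set.Ioi 0) := by
  apply monotoneOn_of_deriv_nonneg (convex_Ioi 0)
  · intro p hp
    exact (hasDerivAt_Dfun q hq p hp).differentiableAt.continuousAt.continuousWithinAt
  · intro p hp
    rw [interior_Ioi] at hp
    exact (hasDerivAt_Dfun q hq p hp).differentiableAt.differentiableWithinAt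
  · intro p hp
    rw [interior_Ioi] at hp
    rw [(hasDerivAt_Dfun q hq p hp).deriv]
    have hp : (0:ℝ) < p := hp
    have key : 54 * q ^ 2 * p ≤ 2 * (p + 2 * q) ^ 3 := by nlinarith [sq_nonneg (p - q), mul_pos hp hq, sq_nonneg p, sq_nonneg q, mul_nonneg (sq_nonneg (p - q)) (by positivity : (0:ℝ) ≤ p + 8 * q)]
    have h2 : 54 * q ^ 2 / (p + 2 * q) ^ 3 ≤ 2 / p := by
      rw [div_le_div_iff₀ (by positivity) hp]
      nlinarith [key]
    linarith

private lemma Dfun_at_q (q : ℝ) (hq : 0 < q) : Dfun q q = 0 := by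
  simp [Dfun]

private def psiF (q p : ℝ) : ℝ :=
  2 * (p * (Real.log p - Real.log q) - p + q) - 3 * (p - q) ^ 2 / (p + 2 * q)

private lemma hasDerivAt_psiF (q : ℝ) (hq : 0 < q) (p : ℝ) (hp : 0 < p) :
    HasDerivAt (psiF q) (Dfun q p) p := by
  have hpq : p + 2 * q ≠ 0 := by positivity
  have h1 : HasDerivAt (fun p : ℝ => p * (Real.log p - Real.log q))
      (1 * (Real.log p - Real.log q) + p * p⁻¹) p :=
    (hasDerivAt_id p).mul ((Real.hasDerivAt_log (ne_of_gt hp)).sub_const (Real.log q))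
  have h2 : HasDerivAt (fun p : ℝ => 2 * (p * (Real.log p - Real.log q) - p + q))
      (2 * ((1 * (Real.log p - Real.log q) + p * p⁻¹) - 1)) p :=
    (((h1.sub (hasDerivAt_id p)).add_const q)).const_mul 2
  have hg : HasDerivAt (fun p : ℝ => 3 * (p - q) ^ 2)
      (3 * (2 * (p - q) ^ 1 * 1)) p := (((hasDerivAt_id p).sub_const q).pow 2).const_mul 3
  have hh : HasDerivAt (fun p : ℝ => p + 2 * q) 1 p := (hasDerivAt_id p).add_const (2 * q)
  have hdiv := hg.div hh (by positivity)
  have := h2.sub hdiv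
  refine HasDerivAt.congr_deriv (f := psiF q) this ?_
  unfold Dfun
  field_simp
  ring

private lemma psiF_nonneg (q : ℝ) (hq : 0 < q) (p : ℝ) (hp : 0 ≤ p) : 0 ≤ psiF q p := by
  have hpsiq : psiF q q = 0 := by
    unfold psiF; field_simp; ring
  rcases eq_or_lt_of_le hp with hp0 | hp0
  · -- p = 0
    unfold psiF
    rw [← hp0]
    have h1 : (0:ℝ) * (Real.log 0 - Real.log q) = 0 := by ring
    rw [h1]
    have h2 : 3 * ((0:ℝ) - q) ^ 2 / (0 + 2 * q) = (3 / 2) * q := by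
      field_simp; ring
    rw [h2]; linarith
  · -- p > 0
    rcases le_or_gt p q with hpq | hpq
    · -- 0 < p ≤ q : ψ antitone on [p, q]
      have hanti : AntitoneOn (psiF q) (Set.Icc p q) := by
        apply antitoneOn_of_deriv_nonpos (convex_Icc p q)
        · intro y hy
          have hy0 : 0 < y := lt_of_lt_of_le hp0 hy.1
          exact (hasDerivAt_psiF q hq y hy0).differentiableAt.continuousAt.continuousWithinAt
        · intro y hy
          rw [interior_Icc] at hy
          have hy0 : 0 < y := lt_trans hp0 hy.1
          exact (hasDerivAt_psiF q hq y hy0).differentiableAt.differentiableWithinAt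
        · intro y hy
          rw [interior_Icc] at hy
          have hy0 : 0 < y := lt_trans hp0 hy.1
          rw [(hasDerivAt_psiF q hq y hy0).deriv]
          have := Dfun_mono q hq (Set.mem_Ioi.2 hy0) (Set.mem_Ioi.2 hq) (le_of_lt hy.2)
          rw [Dfun_at_q q hq] at this
          exact this
      have := hanti (Set.mem_Icc.2 ⟨le_refl p, hpq⟩) (Set.mem_Icc.2 ⟨hpq, le_refl q⟩) hpq
      rw [hpsiq] at this
      exact this
    · -- q < p : ψ monotone on [q, p]
      have hmono : MonotoneOn (psiF q) (Set.Icc q p) := by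
        apply monotoneOn_of_deriv_nonneg (convex_Icc q p)
        · intro y hy
          have hy0 : 0 < y := lt_of_lt_of_le hq hy.1
          exact (hasDerivAt_psiF q hq y hy0).differentiableAt.continuousAt.continuousWithinAt
        · intro y hy
          rw [interior_Icc] at hy
          have hy0 : 0 < y := lt_trans hq hy.1
          exact (hasDerivAt_psiF q hq y hy0).differentiableAt.differentiableWithinAt
        · intro y hy
          rw [interior_Icc] at hy
          have hy0 : 0 < y := lt_trans hq hy.1
          rw [(hasDerivAt_psiF q hq y hy0).deriv]
          have := Dfun_mono q hq (Set.mem_Ioi.2 hq) (Set.mem_Ioi.2 hy0) (le_of_lt hy.1)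
          rw [Dfun_at_q q hq] at this
          exact this
      have := hmono (Set.mem_Icc.2 ⟨le_refl q, le_of_lt hpq⟩)
        (Set.mem_Icc.2 ⟨le_of_lt hpq, le_refl p⟩) (le_of_lt hpq)
      rw [hpsiq] at this
      exact this

/-- pointwise refined Gibbs: `3(p-q)²/(p+2q) ≤ 2(p log(p/q) - p + q)`. -/
private lemma pointwise_gibbs (p q : ℝ) (hp : 0 ≤ p) (hq : 0 ≤ q) (hac : q = 0 → p = 0) :
    3 * (p - q) ^ 2 / (p + 2 * q) ≤ 2 * (p * Real.log (p / q) - p + q) := by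
  rcases eq_or_lt_of_le hq with hq0 | hq0
  · have hp0 : p = 0 := hac hq0.symm
    simp [hp0, ← hq0]
  · have hlog : p * Real.log (p / q) = p * (Real.log p - Real.log q) := by
      rcases eq_or_lt_of_le hp with hp0 | hp0
      · rw [← hp0]; ring
      · rw [Real.log_div (ne_of_gt hp0) (ne_of_gt hq0)]
    rw [hlog]
    have := psiF_nonneg q hq0 p hp
    unfold psiF at this
    linarith

private lemma chi_le_klDiv {β : Type} [Fintype β] (P Q : β → ℝ)
    (hP0 : ∀ b, 0 ≤ P b) (hQ0 : ∀ b, 0 ≤ Q b)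
    (hP1 : ∑ b, P b = 1) (hQ1 : ∑ b, Q b = 1) (hAC : ∀ b, Q b = 0 → P b = 0) :
    ∑ b, 3 * (P b - Q b) ^ 2 / (P b + 2 * Q b) ≤ 2 * klDiv P Q := by
  have key : ∑ b, 3 * (P b - Q b) ^ 2 / (P b + 2 * Q b)
      ≤ ∑ b, 2 * (P b * Real.log (P b / Q b) - P b + Q b) :=
    Finset.sum_le_sum fun b _ => pointwise_gibbs _ _ (hP0 b) (hQ0 b) (hAC b)
  have expand : ∑ b, 2 * (P b * Real.log (P b / Q b) - P b + Q b) = 2 * klDiv P Q := by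
    have hterm : ∀ b, 2 * (P b * Real.log (P b / Q b) - P b + Q b)
        = 2 * (P b * Real.log (P b / Q b)) - 2 * P b + 2 * Q b := fun b => by ring
    rw [Finset.sum_congr rfl fun b _ => hterm b, Finset.sum_add_distrib,
      Finset.sum_sub_distrib, ← Finset.mul_sum, ← Finset.mul_sum, ← Finset.mul_sum,
      hP1, hQ1, klDiv]
    ring
  linarith

lemma klDiv_nonneg' {β : Type} [Fintype β] (P Q : β → ℝ)
    (hP0 : ∀ b, 0 ≤ P b) (hQ0 : ∀ b, 0 ≤ Q b)
    (hP1 : ∑ b, P b = 1) (hQ1 : ∑ b, Q b = 1) (hAC : ∀ b, Q b = 0 → P b = 0) :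
    0 ≤ klDiv P Q := by
  have h := chi_le_klDiv P Q hP0 hQ0 hP1 hQ1 hAC
  have h2 : (0:ℝ) ≤ ∑ b, 3 * (P b - Q b) ^ 2 / (P b + 2 * Q b) :=
    Finset.sum_nonneg fun b _ => div_nonneg (by positivity)
      (by have := hP0 b; have := hQ0 b; linarith)
  linarith

lemma pinsker_fin {β : Type} [Fintype β] (P Q : β → ℝ)
    (hP0 : ∀ b, 0 ≤ P b) (hQ0 : ∀ b, 0 ≤ Q b)
    (hP1 : ∑ b, P b = 1) (hQ1 : ∑ b, Q b = 1) (hAC : ∀ b, Q b = 0 → P b = 0) :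
    ∑ b, |P b - Q b| ≤ Real.sqrt (2 * klDiv P Q) := by
  set f : β → ℝ := fun b => Real.sqrt (3 * (P b - Q b) ^ 2 / (P b + 2 * Q b)) with hf
  set g : β → ℝ := fun b => Real.sqrt ((P b + 2 * Q b) / 3) with hg
  have hfg : ∀ b, f b * g b = |P b - Q b| := by
    intro b
    have hden : (0:ℝ) ≤ P b + 2 * Q b := by have := hP0 b; have := hQ0 b; linarith
    rcases eq_or_lt_of_le hden with h0 | h0
    · have hPb : P b = 0 := by nlinarith [hP0 b, hQ0 b]
      have hQb : Q b = 0 := by nlinarith [hP0 b, hQ0 b]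
      simp [hf, hg, hPb, hQb]
    · rw [hf, hg]
      rw [← Real.sqrt_mul (div_nonneg (by positivity) (le_of_lt h0))]
      have heq : 3 * (P b - Q b) ^ 2 / (P b + 2 * Q b) * ((P b + 2 * Q b) / 3)
          = (P b - Q b) ^ 2 := by
          field_simp
          exact mul_div_cancel_right₀ _ (ne_of_gt (by linarith))
      rw [heq, Real.sqrt_sq_eq_abs]
  have hCS := Finset.sum_mul_sq_le_sq_mul_sq Finset.univ f g
  have hf2 : ∑ b, f b ^ 2 = ∑ b, 3 * (P b - Q b) ^ 2 / (P b + 2 * Q b) :=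
    Finset.sum_congr rfl fun b _ => Real.sq_sqrt (div_nonneg (by positivity)
      (by have := hP0 b; have := hQ0 b; linarith))
  have hg2 : ∑ b, g b ^ 2 = 1 := by
    have hgb : ∀ b, g b ^ 2 = (P b + 2 * Q b) / 3 := fun b => Real.sq_sqrt
      (div_nonneg (by have := hP0 b; have := hQ0 b; linarith) (by norm_num))
    rw [Finset.sum_congr rfl fun b _ => hgb b]
    rw [← Finset.sum_div, Finset.sum_add_distrib, hP1, ← Finset.mul_sum, hQ1]
    norm_num
  have h1 : (∑ b, |P b - Q b|) ^ 2 ≤ 2 * klDiv P Q := by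
    calc (∑ b, |P b - Q b|) ^ 2 = (∑ b, f b * g b) ^ 2 := by
          rw [Finset.sum_congr rfl fun b _ => (hfg b).symm]
      _ ≤ (∑ b, f b ^ 2) * ∑ b, g b ^ 2 := hCS
      _ = ∑ b, 3 * (P b - Q b) ^ 2 / (P b + 2 * Q b) := by rw [hf2, hg2, mul_one]
      _ ≤ 2 * klDiv P Q := chi_le_klDiv P Q hP0 hQ0 hP1 hQ1 hAC
  have habs : 0 ≤ ∑ b, |P b - Q b| := Finset.sum_nonneg fun b _ => abs_nonneg _
  calc ∑ b, |P b - Q b| = Real.sqrt ((∑ b, |P b - Q b|) ^ 2) := (Real.sqrt_sq habs).symm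
    _ ≤ Real.sqrt (2 * klDiv P Q) := Real.sqrt_le_sqrt h1

private lemma matMaxAbs_le {α : Type} [Fintype α] [Nonempty α] (M : Matrix α α ℝ)
    (i b : α) : |M i b| ≤ matMaxAbs M := by
  exact le_ciSup (f := fun p : α × α => |M p.1 p.2|)
    (Set.Finite.bddAbove (Set.finite_range _)) (⟨i, b⟩ : α × α)

private lemma delta_fact {α : Type} [Fintype α] (K : Matrix α α ℝ) (hKdet : IsUnit K.det)
    (a : α) : Matrix.mulVec (K⁻¹)ᵀ (fun b => K a b)
      = fun i => if i = a then (1:ℝ) else 0 := by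
  have h1 : (fun b => K a b) = Matrix.mulVec Kᵀ (fun i => if i = a then (1:ℝ) else 0) := by
    funext b
    simp [Matrix.mulVec, dotProduct, Matrix.transpose_apply, mul_ite]
  rw [h1, Matrix.mulVec_mulVec, ← Matrix.transpose_mul, Matrix.mul_nonsing_inv K hKdet,
    Matrix.transpose_one, Matrix.one_mulVec]

/-- Key continuity-of-Bayes-response lemma. -/
private lemma key_bayes {α : Type} [Fintype α] [Nonempty α]
    (K : Matrix α α ℝ) (hK0 : ∀ a b, 0 ≤ K a b) (hKrow : ∀ a, ∑ b, K a b = 1)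
    (hKdet : IsUnit K.det)
    (Λ : α → α → ℝ) (Λmax : ℝ)
    (hΛ0 : ∀ i j, 0 ≤ Λ i j) (hΛmax : ∀ i j, Λ i j ≤ Λmax)
    (hΛzero : ∀ i : α, ∃ j : α, Λ i j = 0)
    (XB : (α → ℝ) → α)
    (hXB : ∀ v : α → ℝ, ∀ j : α, ∑ i, Λ i (XB v) * v i ≤ ∑ i, Λ i j * v i)
    (a : α) (q : α → ℝ) :
    ∑ b, K a b * Λ a (hadFilter K XB q b)
      ≤ Λmax * (Fintype.card α : ℝ) * matMaxAbs (K⁻¹)ᵀ * ∑ b, |q b - K a b| := by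
  obtain ⟨j, hj⟩ := hΛzero a
  set u : α → ℝ := Matrix.mulVec (K⁻¹)ᵀ q with hu
  set δ : α → ℝ := fun i => if i = a then (1:ℝ) else 0 with hδ
  -- step 1: pointwise in b
  have step1 : ∀ b, K a b * Λ a (hadFilter K XB q b)
      ≤ Λmax * ∑ i, K i b * |u i - δ i| := by
    intro b
    set v : α → ℝ := fun i => K i b * u i with hv
    have hhad : hadFilter K XB q b = XB v := rfl
    rw [hhad]
    have e1 : K a b * Λ a (XB v) = ∑ i, Λ i (XB v) * (K i b * δ i) := by
      rw [Finset.sum_eq_single a]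
      · simp [hδ]; ring
      · intro i _ hne; simp [hδ, hne]
      · intro h; exact absurd (Finset.mem_univ a) h
    have e2 : ∑ i, Λ i (XB v) * (K i b * δ i)
        = ∑ i, Λ i (XB v) * v i + ∑ i, Λ i (XB v) * (K i b * δ i - v i) := by
      rw [← Finset.sum_add_distrib]
      exact Finset.sum_congr rfl fun i _ => by ring
    have e3 : ∑ i, Λ i (XB v) * v i + ∑ i, Λ i (XB v) * (K i b * δ i - v i)
        ≤ ∑ i, Λ i j * v i + ∑ i, Λ i (XB v) * (K i b * δ i - v i) := by
      have := hXB v j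
      linarith
    have e4 : ∑ i, Λ i j * v i + ∑ i, Λ i (XB v) * (K i b * δ i - v i)
        = ∑ i, Λ i j * (K i b * δ i)
          + ∑ i, (Λ i j - Λ i (XB v)) * (v i - K i b * δ i) := by
      rw [← Finset.sum_add_distrib, ← Finset.sum_add_distrib]
      exact Finset.sum_congr rfl fun i _ => by ring
    have e5 : ∑ i, Λ i j * (K i b * δ i) = 0 := by
      rw [Finset.sum_eq_single a]
      · simp [hδ, hj]
      · intro i _ hne; simp [hδ, hne]
      · intro h; exact absurd (Finset.mem_univ a) h
    have e6 : ∑ i, (Λ i j - Λ i (XB v)) * (v i - K i b * δ i)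
        ≤ ∑ i, Λmax * (K i b * |u i - δ i|) := by
      apply Finset.sum_le_sum
      intro i _
      have hd : v i - K i b * δ i = K i b * (u i - δ i) := by rw [hv]; ring
      rw [hd]
      have h1 : (Λ i j - Λ i (XB v)) * (K i b * (u i - δ i))
          ≤ |(Λ i j - Λ i (XB v)) * (K i b * (u i - δ i))| := le_abs_self _
      have h2 : |(Λ i j - Λ i (XB v)) * (K i b * (u i - δ i))|
          = |Λ i j - Λ i (XB v)| * (K i b * |u i - δ i|) := by
        rw [abs_mul, abs_mul, abs_of_nonneg (hK0 i b)]
      have h3 : |Λ i j - Λ i (XB v)| ≤ Λmax := by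
        rw [abs_le]
        constructor
        · have := hΛ0 i j; have := hΛmax i (XB v); linarith
        · have := hΛ0 i (XB v); have := hΛmax i j; linarith
      calc (Λ i j - Λ i (XB v)) * (K i b * (u i - δ i))
          ≤ |Λ i j - Λ i (XB v)| * (K i b * |u i - δ i|) := by rw [← h2]; exact h1
        _ ≤ Λmax * (K i b * |u i - δ i|) := by
            apply mul_le_mul_of_nonneg_right h3
            exact mul_nonneg (hK0 i b) (abs_nonneg _)
    calc K a b * Λ a (XB v) = ∑ i, Λ i (XB v) * (K i b * δ i) := e1
      _ = _ := e2
      _ ≤ _ := e3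
      _ = _ := e4
      _ ≤ 0 + ∑ i, Λmax * (K i b * |u i - δ i|) := by rw [e5]; linarith [e6]
      _ = Λmax * ∑ i, K i b * |u i - δ i| := by rw [zero_add, Finset.mul_sum]
  -- step 2: sum over b
  have step2 : ∑ b, K a b * Λ a (hadFilter K XB q b)
      ≤ Λmax * ∑ i, |u i - δ i| := by
    calc ∑ b, K a b * Λ a (hadFilter K XB q b)
        ≤ ∑ b, Λmax * ∑ i, K i b * |u i - δ i| := Finset.sum_le_sum fun b _ => step1 b
      _ = Λmax * ∑ i, (∑ b, K i b) * |u i - δ i| := by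
          rw [← Finset.mul_sum, Finset.sum_comm]
          congr 1
          exact Finset.sum_congr rfl fun i _ => by rw [Finset.sum_mul]
      _ = Λmax * ∑ i, |u i - δ i| := by
          congr 1
          exact Finset.sum_congr rfl fun i _ => by rw [hKrow i, one_mul]
  -- step 3: bound the variation in the X-domain by the Z-domain variation
  have step3 : ∑ i, |u i - δ i|
      ≤ (Fintype.card α : ℝ) * matMaxAbs (K⁻¹)ᵀ * ∑ b, |q b - K a b| := by
    have hud : ∀ i, u i - δ i = Matrix.mulVec (K⁻¹)ᵀ (fun b => q b - K a b) i := by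
      intro i
      have : (fun b => q b - K a b) = q - (fun b => K a b) := rfl
      rw [this, Matrix.mulVec_sub, hu, hδ, delta_fact K hKdet a]
      simp [Pi.sub_apply]
    calc ∑ i, |u i - δ i|
        = ∑ i, |∑ b, (K⁻¹)ᵀ i b * (q b - K a b)| := by
          exact Finset.sum_congr rfl fun i _ => by rw [hud i]; rfl
      _ ≤ ∑ i, ∑ b, |(K⁻¹)ᵀ i b| * |q b - K a b| := by
          apply Finset.sum_le_sum
          intro i _
          calc |∑ b, (K⁻¹)ᵀ i b * (q b - K a b)| ≤ ∑ b, |(K⁻¹)ᵀ i b * (q b - K a b)| :=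
                Finset.abs_sum_le_sum_abs _ _
            _ = ∑ b, |(K⁻¹)ᵀ i b| * |q b - K a b| :=
                Finset.sum_congr rfl fun b _ => abs_mul _ _
      _ ≤ ∑ i : α, ∑ b, matMaxAbs (K⁻¹)ᵀ * |q b - K a b| := by
          apply Finset.sum_le_sum; intro i _
          apply Finset.sum_le_sum; intro b _
          exact mul_le_mul_of_nonneg_right (matMaxAbs_le _ i b) (abs_nonneg _)
      _ = (Fintype.card α : ℝ) * matMaxAbs (K⁻¹)ᵀ * ∑ b, |q b - K a b| := by
          rw [Finset.sum_const, ← Finset.mul_sum, Finset.card_univ, nsmul_eq_mul]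
          ring
  have hΛmax0 : 0 ≤ Λmax := le_trans (hΛ0 a j) (hΛmax a j)
  calc ∑ b, K a b * Λ a (hadFilter K XB q b) ≤ Λmax * ∑ i, |u i - δ i| := step2
    _ ≤ Λmax * ((Fintype.card α : ℝ) * matMaxAbs (K⁻¹)ᵀ * ∑ b, |q b - K a b|) :=
        mul_le_mul_of_nonneg_left step3 hΛmax0
    _ = Λmax * (Fintype.card α : ℝ) * matMaxAbs (K⁻¹)ᵀ * ∑ b, |q b - K a b| := by ring

private lemma prod_split_at {n : ℕ} (t : Fin n)
    (f : Fin n → ℝ) : ∏ s, f s = f t * ∏ j : {j : Fin n // j ≠ t}, f j := by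
  rw [← Finset.mul_prod_erase Finset.univ f (Finset.mem_univ t)]
  congr 1
  rw [← Finset.prod_subtype (Finset.univ.erase t)
    (fun j => by simp [Finset.mem_erase]) f]

/-- Resampling coordinate `t` under the channel leaves DMC expectations unchanged. -/
private lemma update_identity {n : ℕ} {α : Type} [Fintype α]
    (K : Matrix α α ℝ) (hKrow : ∀ a, ∑ b, K a b = 1)
    (x : Fin n → α) (t : Fin n) (F : (Fin n → α) → ℝ) :
    ∑ z : Fin n → α, (∏ s, K (x s) (z s)) * F z
      = ∑ z : Fin n → α, (∏ s, K (x s) (z s)) * ∑ b, K (x t) b * F (Function.update z t b) := by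
  set e := Equiv.funSplitAt t α with he
  have h1 : ∀ (c : α) (w : {j : Fin n // j ≠ t} → α), e.symm (c, w) t = c := by
    intro c w
    simp [he, Equiv.funSplitAt, Equiv.piSplitAt]
  have h2 : ∀ (c : α) (w : {j : Fin n // j ≠ t} → α) (j : {j : Fin n // j ≠ t}),
      e.symm (c, w) j = w j := by
    intro c w j
    simp [he, Equiv.funSplitAt, Equiv.piSplitAt, j.2]
  have h3 : ∀ (c b : α) (w : {j : Fin n // j ≠ t} → α),
      Function.update (e.symm (c, w)) t b = e.symm (b, w) := by
    intro c b w
    funext j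
    by_cases hj : j = t
    · subst hj; rw [Function.update_self, h1]
    · rw [Function.update_of_ne hj, h2 c w ⟨j, hj⟩, h2 b w ⟨j, hj⟩]
  have h4 : ∀ (c : α) (w : {j : Fin n // j ≠ t} → α),
      ∏ s, K (x s) (e.symm (c, w) s) = K (x t) c * ∏ j : {j : Fin n // j ≠ t}, K (x j) (w j) := by
    intro c w
    rw [prod_split_at t (fun s => K (x s) (e.symm (c, w) s)), h1 c w]
    congr 1
    exact Finset.prod_congr rfl fun j _ => by rw [h2]
  have lhs_eq : ∀ (G : (Fin n → α) → ℝ), ∑ z : Fin n → α, G z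
      = ∑ c : α, ∑ w : {j : Fin n // j ≠ t} → α, G (e.symm (c, w)) := by
    intro G
    rw [← Equiv.sum_comp e.symm G, Fintype.sum_prod_type]
  rw [lhs_eq (fun z => (∏ s, K (x s) (z s)) * F z),
    lhs_eq (fun z => (∏ s, K (x s) (z s)) * ∑ b, K (x t) b * F (Function.update z t b))]
  rw [Finset.sum_comm, Finset.sum_comm (γ := α)]
  apply Finset.sum_congr rfl
  intro w _
  simp only [h4, h3]
  set P : ℝ := ∏ j : {j : Fin n // j ≠ t}, K (x j) (w j) with hP
  set S : ℝ := ∑ b, K (x t) b * F (e.symm (b, w)) with hS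
  have rhs : ∑ c : α, K (x t) c * P * ∑ b, K (x t) b * F (e.symm (b, w))
      = P * S := by
    rw [← Finset.sum_mul, ← Finset.sum_mul, hKrow, one_mul, ← hS]
  have lhs : ∑ c : α, K (x t) c * P * F (e.symm (c, w)) = P * S := by
    rw [hS, Finset.mul_sum]
    exact Finset.sum_congr rfl fun c _ => by ring
  rw [lhs, rhs]

private def Ncyl {n : ℕ} {α : Type} [Fintype α]
    (Q : (Fin n → α) → ℝ) (z : Fin n → α) (k : ℕ) : ℝ :=
  ∑ z' : Fin n → α, if ∀ s : Fin n, (s : ℕ) < k → z' s = z s then Q z' else 0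

variable {n : ℕ} {α : Type} [Fintype α] (Q : (Fin n → α) → ℝ)

private lemma den_eq_Ncyl (t : Fin n) (z : Fin n → α) :
    (∑ z' : Fin n → α, if ∀ s : Fin n, (s : ℕ) + 1 ≤ (t : ℕ) → z' s = z s then Q z' else 0)
      = Ncyl Q z t := by
  apply Finset.sum_congr rfl
  intro z' _
  have hiff : (∀ s : Fin n, (s : ℕ) + 1 ≤ (t : ℕ) → z' s = z s)
      ↔ (∀ s : Fin n, (s : ℕ) < (t : ℕ) → z' s = z s) := by
    constructor <;> intro h s hs <;> exact h s (by omega)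
  rw [if_congr hiff rfl rfl]

private lemma num_eq_Ncyl (t : Fin n) (z : Fin n → α) (b : α) :
    (∑ z' : Fin n → α, if (∀ s : Fin n, (s : ℕ) + 1 ≤ (t : ℕ) → z' s = z s) ∧ z' t = b
      then Q z' else 0) = Ncyl Q (Function.update z t b) ((t : ℕ) + 1) := by
  apply Finset.sum_congr rfl
  intro z' _
  have hiff : ((∀ s : Fin n, (s : ℕ) + 1 ≤ (t : ℕ) → z' s = z s) ∧ z' t = b)
      ↔ (∀ s : Fin n, (s : ℕ) < (t : ℕ) + 1 → z' s = Function.update z t b s) := by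
    constructor
    · rintro ⟨h1, h2⟩ s hs
      by_cases hst : s = t
      · subst hst; rw [Function.update_self]; exact h2
      · have hlt : (s : ℕ) + 1 ≤ (t : ℕ) := by
          have : (s : ℕ) ≠ (t : ℕ) := fun hc => hst (Fin.ext hc)
          omega
        rw [Function.update_of_ne hst]; exact h1 s hlt
    · intro h
      constructor
      · intro s hs
        have hst : s ≠ t := fun hc => by subst hc; omega
        have := h s (by omega)
        rwa [Function.update_of_ne hst] at this
      · have := h t (by omega)
        rwa [Function.update_self] at this
  rw [if_congr hiff rfl rfl]

private lemma condDelay_eq_div (t : Fin n) (z : Fin n → α) (b : α) :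
    condDelay Q 1 t z b
      = Ncyl Q (Function.update z t b) ((t : ℕ) + 1) / Ncyl Q z t := by
  rw [condDelay, num_eq_Ncyl, den_eq_Ncyl]

private lemma Ncyl_zero (hQ1 : ∑ z', Q z' = 1) (z : Fin n → α) : Ncyl Q z 0 = 1 := by
  rw [← hQ1, Ncyl]
  apply Finset.sum_congr rfl
  intro z' _
  rw [if_pos]
  intro s hs
  omega

private lemma Ncyl_top (z : Fin n → α) : Ncyl Q z n = Q z := by
  rw [Ncyl, Finset.sum_eq_single z]
  · rw [if_pos]; intro s _; rfl
  · intro z' _ hne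
    rw [if_neg]
    intro h
    exact hne (funext fun s => h s s.2)
  · intro h; exact absurd (Finset.mem_univ z) h

private lemma le_Ncyl (hQ0 : ∀ z', 0 ≤ Q z') (z : Fin n → α) (k : ℕ) :
    Q z ≤ Ncyl Q z k := by
  have := Finset.single_le_sum
    (f := fun z' => if ∀ s : Fin n, (s : ℕ) < k → z' s = z s then Q z' else 0)
    (fun z' _ => by split; exacts [hQ0 z', le_rfl]) (Finset.mem_univ z)
  simp only [eq_self_iff_true, implies_true, if_true] at this
  exact this

private lemma Ncyl_nonneg (hQ0 : ∀ z', 0 ≤ Q z') (z : Fin n → α) (k : ℕ) :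
    0 ≤ Ncyl Q z k :=
  Finset.sum_nonneg fun z' _ => by split; exacts [hQ0 z', le_rfl]

private lemma sum_num (t : Fin n) (z : Fin n → α) :
    ∑ b, Ncyl Q (Function.update z t b) ((t : ℕ) + 1) = Ncyl Q z t := by
  have h : ∀ b, Ncyl Q (Function.update z t b) ((t : ℕ) + 1)
      = ∑ z' : Fin n → α, if (∀ s : Fin n, (s : ℕ) + 1 ≤ (t : ℕ) → z' s = z s) ∧ z' t = b
        then Q z' else 0 := fun b => (num_eq_Ncyl Q t z b).symm
  rw [Finset.sum_congr rfl fun b _ => h b, Finset.sum_comm, ← den_eq_Ncyl]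
  apply Finset.sum_congr rfl
  intro z' _
  by_cases hc : ∀ s : Fin n, (s : ℕ) + 1 ≤ (t : ℕ) → z' s = z s
  · rw [if_pos hc]
    have : ∀ b, (if (∀ s : Fin n, (s : ℕ) + 1 ≤ (t : ℕ) → z' s = z s) ∧ z' t = b
        then Q z' else 0) = if z' t = b then Q z' else 0 := by
      intro b
      by_cases hb : z' t = b
      · rw [if_pos ⟨hc, hb⟩, if_pos hb]
      · rw [if_neg (fun h => hb h.2), if_neg hb]
    rw [Finset.sum_congr rfl fun b _ => this b, Finset.sum_ite_eq univ (z' t) fun _ => Q z']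
    simp
  · rw [if_neg hc]
    apply Finset.sum_eq_zero
    intro b _
    rw [if_neg (fun h => hc h.1)]

private lemma condDelay_invariant (t : Fin n) (z : Fin n → α) (b b' : α) :
    condDelay Q 1 t (Function.update z t b) b' = condDelay Q 1 t z b' := by
  rw [condDelay, condDelay]
  have hcond : ∀ z' : Fin n → α,
      (∀ s : Fin n, (s : ℕ) + 1 ≤ (t : ℕ) → z' s = Function.update z t b s)
      ↔ (∀ s : Fin n, (s : ℕ) + 1 ≤ (t : ℕ) → z' s = z s) := by
    intro z'
    constructor <;> intro h s hs <;> have hst : s ≠ t := fun hc => by subst hc; omega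
    · have := h s hs; rwa [Function.update_of_ne hst] at this
    · rw [Function.update_of_ne hst]; exact h s hs
  congr 1
  · exact Finset.sum_congr rfl fun z' _ => if_congr (and_congr_left' (hcond z')) rfl rfl
  · exact Finset.sum_congr rfl fun z' _ => if_congr (hcond z') rfl rfl

private lemma prod_telescope (N : ℕ → ℝ) (hN : ∀ k, N k ≠ 0) (m : ℕ) :
    ∏ k ∈ Finset.range m, N (k + 1) / N k = N m / N 0 := by
  induction m with
  | zero => simp [div_self (hN 0)]
  | succ m ih =>
    rw [Finset.prod_range_succ, ih]
    have h0 := hN 0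
    have hm := hN m
    field_simp

private lemma condDelay_telescope (hQ0 : ∀ z', 0 ≤ Q z') (hQ1 : ∑ z', Q z' = 1)
    (z : Fin n → α) (hz : 0 < Q z) :
    ∏ t : Fin n, condDelay Q 1 t z (z t) = Q z := by
  have hfac : ∀ t : Fin n, condDelay Q 1 t z (z t) = Ncyl Q z ((t : ℕ) + 1) / Ncyl Q z t := by
    intro t
    rw [condDelay_eq_div, Function.update_eq_self]
  rw [Finset.prod_congr rfl fun t _ => hfac t]
  have hNpos : ∀ k, Ncyl Q z k ≠ 0 := fun k => ne_of_gt (lt_of_lt_of_le hz (le_Ncyl Q hQ0 z k))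
  have := Fin.prod_univ_eq_prod_range (fun k => Ncyl Q z (k + 1) / Ncyl Q z k) n
  rw [this, prod_telescope _ hNpos, Ncyl_top, Ncyl_zero Q hQ1, div_one]

private lemma condDelay_sum_one (t : Fin n) (z : Fin n → α) (hden : Ncyl Q z t ≠ 0) :
    ∑ b, condDelay Q 1 t z b = 1 := by
  rw [Finset.sum_congr rfl fun b _ => condDelay_eq_div Q t z b, ← Finset.sum_div,
    sum_num, div_self hden]

private lemma condDelay_nonneg (hQ0 : ∀ z', 0 ≤ Q z') (t : Fin n) (z : Fin n → α) (b : α) :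
    0 ≤ condDelay Q 1 t z b := by
  rw [condDelay_eq_div]
  exact div_nonneg (Ncyl_nonneg Q hQ0 _ _) (Ncyl_nonneg Q hQ0 _ _)

theorem mutual_information_upper_bound_causal
    {n : ℕ} (hn : 0 < n) {α : Type} [Fintype α] [Nonempty α]
    (pX : (Fin n → α) → ℝ) (hpX0 : ∀ x, 0 ≤ pX x) (hpX1 : ∑ x, pX x = 1)
    (K : Matrix α α ℝ) (hK0 : ∀ a b, 0 ≤ K a b) (hKrow : ∀ a, ∑ b, K a b = 1)
    (hKdet : IsUnit K.det)
    (Λ : α → α → ℝ) (Λmax : ℝ)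
    (hΛ0 : ∀ i j, 0 ≤ Λ i j) (hΛmax : ∀ i j, Λ i j ≤ Λmax)
    (hΛzero : ∀ i : α, ∃ j : α, Λ i j = 0)
    (XB : (α → ℝ) → α)
    (hXB : ∀ v : α → ℝ, ∀ j : α, ∑ i, Λ i (XB v) * v i ≤ ∑ i, Λ i j * v i) :
    ∑ x : Fin n → α, ∑ z : Fin n → α, dmcJoint pX K x z *
        ((n : ℝ)⁻¹ * ∑ t, Λ (x t) (hadFilter K XB (condDelay (zMarg pX K) 1 t z) (z t)))
      ≤ Real.sqrt 2 * matMaxAbs (K⁻¹)ᵀ * (Fintype.card α : ℝ) * Λmax *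
        Real.sqrt ((n : ℝ)⁻¹ * mutInfo pX K) := by
  classical
  set Q : (Fin n → α) → ℝ := zMarg pX K with hQdef
  -- basic positivity and normalization facts
  have hΛmax0 : 0 ≤ Λmax :=
    le_trans (hΛ0 (Classical.arbitrary α) (Classical.arbitrary α)) (hΛmax _ _)
  have hM0 : 0 ≤ matMaxAbs (K⁻¹)ᵀ :=
    le_trans (abs_nonneg _) (matMaxAbs_le (K⁻¹)ᵀ (Classical.arbitrary α) (Classical.arbitrary α))
  have hdmc0 : ∀ x z, 0 ≤ dmcJoint pX K x z := fun x z =>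
    mul_nonneg (hpX0 x) (Finset.prod_nonneg fun s _ => hK0 _ _)
  have hQ0 : ∀ z, 0 ≤ Q z := fun z => Finset.sum_nonneg fun x _ => hdmc0 x z
  have hsumz : ∀ x : Fin n → α, ∑ z : Fin n → α, ∏ s, K (x s) (z s) = 1 := by
    intro x
    rw [← Fintype.prod_sum (f := fun (t : Fin n) (b : α) => K (x t) b)]
    simp [hKrow]
  have hdmcx : ∀ x, ∑ z, dmcJoint pX K x z = pX x := by
    intro x
    simp only [dmcJoint]
    rw [← Finset.mul_sum, hsumz, mul_one]
  have hP1 : ∑ x : Fin n → α, ∑ z : Fin n → α, dmcJoint pX K x z = 1 := by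
    rw [Finset.sum_congr rfl fun x _ => hdmcx x, hpX1]
  have hQ1 : ∑ z, Q z = 1 := by
    rw [hQdef]
    simp only [zMarg]
    rw [Finset.sum_comm, hP1]
  -- support facts
  have hdmc_le_Q : ∀ x z, dmcJoint pX K x z ≤ Q z := by
    intro x z
    exact Finset.single_le_sum (f := fun x' => dmcJoint pX K x' z)
      (fun x' _ => hdmc0 x' z) (Finset.mem_univ x)
  have hKpos : ∀ x z, 0 < dmcJoint pX K x z → ∀ s, 0 < K (x s) (z s) := by
    intro x z h s
    rcases eq_or_lt_of_le (hK0 (x s) (z s)) with h0 | h0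
    · exfalso
      have : dmcJoint pX K x z = 0 := by
        rw [dmcJoint, Finset.prod_eq_zero (Finset.mem_univ s) h0.symm, mul_zero]
      rw [this] at h; exact lt_irrefl 0 h
    · exact h0
  have hpXpos : ∀ x z, 0 < dmcJoint pX K x z → 0 < pX x := by
    intro x z h
    rcases eq_or_lt_of_le (hpX0 x) with h0 | h0
    · exfalso
      have : dmcJoint pX K x z = 0 := by rw [dmcJoint, ← h0, zero_mul]
      rw [this] at h; exact lt_irrefl 0 h
    · exact h0
  have hdenpos : ∀ x z, 0 < dmcJoint pX K x z → ∀ k, 0 < Ncyl Q z k := by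
    intro x z h k
    exact lt_of_lt_of_le (lt_of_lt_of_le h (hdmc_le_Q x z)) (le_Ncyl Q hQ0 z k)
  have hnumpos : ∀ x z, 0 < dmcJoint pX K x z → ∀ (t : Fin n) (b : α), 0 < K (x t) b →
      0 < Ncyl Q (Function.update z t b) ((t : ℕ) + 1) := by
    intro x z h t b hKb
    have hdu : 0 < dmcJoint pX K x (Function.update z t b) := by
      rw [dmcJoint]
      apply mul_pos (hpXpos x z h)
      apply Finset.prod_pos
      intro s _
      by_cases hst : s = t
      · subst hst; rw [Function.update_self]; exact hKb
      · rw [Function.update_of_ne hst]; exact hKpos x z h s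
    exact lt_of_lt_of_le hdu (le_trans (hdmc_le_Q x _) (le_Ncyl Q hQ0 _ _))
  have hqAC : ∀ x z, 0 < dmcJoint pX K x z → ∀ (t : Fin n) (b : α),
      condDelay Q 1 t z b = 0 → K (x t) b = 0 := by
    intro x z h t b hq
    by_contra hKb
    have hKb' : 0 < K (x t) b := lt_of_le_of_ne (hK0 _ _) (Ne.symm hKb)
    have : 0 < condDelay Q 1 t z b := by
      rw [condDelay_eq_div]
      exact div_pos (hnumpos x z h t b hKb') (hdenpos x z h t)
    rw [hq] at this; exact lt_irrefl 0 this
  have hqpos : ∀ x z, 0 < dmcJoint pX K x z → ∀ t : Fin n,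
      0 < condDelay Q 1 t z (z t) := by
    intro x z h t
    rw [condDelay_eq_div, Function.update_eq_self]
    exact div_pos (hdenpos x z h ((t : ℕ) + 1)) (hdenpos x z h t)
  have hqsum : ∀ x z, 0 < dmcJoint pX K x z → ∀ t : Fin n,
      ∑ b, condDelay Q 1 t z b = 1 := fun x z h t =>
    condDelay_sum_one Q t z (ne_of_gt (hdenpos x z h t))
  -- the conditional KL divergences
  set kl : Fin n → (Fin n → α) → (Fin n → α) → ℝ :=
    fun t x z => klDiv (fun b => K (x t) b) (condDelay Q 1 t z) with hkldef
  have hklnonneg : ∀ t x z, 0 < dmcJoint pX K x z → 0 ≤ kl t x z := by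
    intro t x z h
    simp only [hkldef]
    exact klDiv_nonneg' _ _ (hK0 (x t)) (condDelay_nonneg Q hQ0 t z) (hKrow (x t))
      (hqsum x z h t) (hqAC x z h t)
  set C : ℝ := Λmax * (Fintype.card α : ℝ) * matMaxAbs (K⁻¹)ᵀ with hCdef
  have hC0 : 0 ≤ C := mul_nonneg (mul_nonneg hΛmax0 (Nat.cast_nonneg _)) hM0
  -- resampling identity scaled by pX
  have resample : ∀ (x : Fin n → α) (t : Fin n) (F : (Fin n → α) → ℝ),
      ∑ z, dmcJoint pX K x z * F z
        = ∑ z, dmcJoint pX K x z * ∑ b, K (x t) b * F (Function.update z t b) := by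
    intro x t F
    have e1 : ∀ (G : (Fin n → α) → ℝ), ∑ z, dmcJoint pX K x z * G z
        = pX x * ∑ z, (∏ s, K (x s) (z s)) * G z := by
      intro G
      rw [Finset.mul_sum]
      exact Finset.sum_congr rfl fun z _ => by rw [dmcJoint]; ring
    rw [e1, e1, update_identity K hKrow x t F]
  have hqinv : ∀ (t : Fin n) (z : Fin n → α) (b : α),
      condDelay Q 1 t (Function.update z t b) = condDelay Q 1 t z :=
    fun t z b => funext fun b' => condDelay_invariant Q t z b b'
  -- triple sum swap
  have swap3 : ∀ (g : Fin n → (Fin n → α) → (Fin n → α) → ℝ),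
      ∑ x : Fin n → α, ∑ z : Fin n → α, ∑ t, g t x z
        = ∑ t, ∑ x : Fin n → α, ∑ z : Fin n → α, g t x z := by
    intro g
    rw [Finset.sum_congr rfl fun x (_ : x ∈ Finset.univ) => Finset.sum_comm]
    exact Finset.sum_comm
  -- Step A : rearrange the LHS
  have pull3 : ∀ (c : ℝ) (g : Fin n → (Fin n → α) → (Fin n → α) → ℝ),
      ∑ t, ∑ x : Fin n → α, ∑ z : Fin n → α, c * g t x z
        = c * ∑ t, ∑ x : Fin n → α, ∑ z : Fin n → α, g t x z := by
    intro c g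
    rw [Finset.mul_sum]
    apply Finset.sum_congr rfl; intro t _
    rw [Finset.mul_sum]
    apply Finset.sum_congr rfl; intro x _
    rw [Finset.mul_sum]
  have stepA : ∑ x : Fin n → α, ∑ z : Fin n → α, dmcJoint pX K x z *
        ((n : ℝ)⁻¹ * ∑ t, Λ (x t) (hadFilter K XB (condDelay Q 1 t z) (z t)))
      = (n : ℝ)⁻¹ * ∑ t, ∑ x : Fin n → α, ∑ z : Fin n → α, dmcJoint pX K x z *
          Λ (x t) (hadFilter K XB (condDelay Q 1 t z) (z t)) := by
    calc ∑ x : Fin n → α, ∑ z : Fin n → α, dmcJoint pX K x z *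
          ((n : ℝ)⁻¹ * ∑ t, Λ (x t) (hadFilter K XB (condDelay Q 1 t z) (z t)))
        = ∑ x : Fin n → α, ∑ z : Fin n → α, ∑ t, (n : ℝ)⁻¹ * (dmcJoint pX K x z *
            Λ (x t) (hadFilter K XB (condDelay Q 1 t z) (z t))) := by
          apply Finset.sum_congr rfl; intro x _
          apply Finset.sum_congr rfl; intro z _
          rw [Finset.mul_sum, Finset.mul_sum]
          exact Finset.sum_congr rfl fun t _ => by ring
      _ = ∑ t, ∑ x : Fin n → α, ∑ z : Fin n → α, (n : ℝ)⁻¹ * (dmcJoint pX K x z *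
            Λ (x t) (hadFilter K XB (condDelay Q 1 t z) (z t))) :=
          swap3 (fun t x z => (n : ℝ)⁻¹ * (dmcJoint pX K x z *
            Λ (x t) (hadFilter K XB (condDelay Q 1 t z) (z t))))
      _ = (n : ℝ)⁻¹ * ∑ t, ∑ x : Fin n → α, ∑ z : Fin n → α, dmcJoint pX K x z *
            Λ (x t) (hadFilter K XB (condDelay Q 1 t z) (z t)) := pull3 _ _
  -- Step B : resample + Bayes continuity + Pinsker
  have stepB : ∀ t : Fin n,
      ∑ x : Fin n → α, ∑ z : Fin n → α, dmcJoint pX K x z *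
          Λ (x t) (hadFilter K XB (condDelay Q 1 t z) (z t))
        ≤ ∑ x : Fin n → α, ∑ z : Fin n → α, dmcJoint pX K x z *
          (C * Real.sqrt (2 * kl t x z)) := by
    intro t
    apply Finset.sum_le_sum; intro x _
    have hre : ∑ z, dmcJoint pX K x z * Λ (x t) (hadFilter K XB (condDelay Q 1 t z) (z t))
        = ∑ z, dmcJoint pX K x z *
          ∑ b, K (x t) b * Λ (x t) (hadFilter K XB (condDelay Q 1 t z) b) := by
      rw [resample x t (fun z => Λ (x t) (hadFilter K XB (condDelay Q 1 t z) (z t)))]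
      apply Finset.sum_congr rfl; intro z _
      simp only [Function.update_self, hqinv]
    rw [hre]
    apply Finset.sum_le_sum; intro z _
    rcases eq_or_lt_of_le (hdmc0 x z) with h0 | h0
    · rw [← h0, zero_mul, zero_mul]
    · apply mul_le_mul_of_nonneg_left _ (le_of_lt h0)
      have hkey := key_bayes K hK0 hKrow hKdet Λ Λmax hΛ0 hΛmax hΛzero XB hXB
        (x t) (condDelay Q 1 t z)
      have hpin : ∑ b, |K (x t) b - condDelay Q 1 t z b|
          ≤ Real.sqrt (2 * kl t x z) := by
        simp only [hkldef]
        exact pinsker_fin (fun b => K (x t) b) (condDelay Q 1 t z) (hK0 (x t))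
          (condDelay_nonneg Q hQ0 t z) (hKrow (x t)) (hqsum x z h0 t) (hqAC x z h0 t)
      have habs : ∑ b, |condDelay Q 1 t z b - K (x t) b|
          = ∑ b, |K (x t) b - condDelay Q 1 t z b| :=
        Finset.sum_congr rfl fun b _ => abs_sub_comm _ _
      calc ∑ b, K (x t) b * Λ (x t) (hadFilter K XB (condDelay Q 1 t z) b)
          ≤ Λmax * (Fintype.card α : ℝ) * matMaxAbs (K⁻¹)ᵀ *
            ∑ b, |condDelay Q 1 t z b - K (x t) b| := hkey
        _ = C * ∑ b, |K (x t) b - condDelay Q 1 t z b| := by rw [hCdef, habs]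
        _ ≤ C * Real.sqrt (2 * kl t x z) := mul_le_mul_of_nonneg_left hpin hC0
  -- Step C : chain rule for mutual information
  have stepC : ∑ t, ∑ x : Fin n → α, ∑ z : Fin n → α, dmcJoint pX K x z * kl t x z
      = mutInfo pX K := by
    have hper : ∀ (t : Fin n) (x : Fin n → α), ∑ z, dmcJoint pX K x z * kl t x z
        = ∑ z, dmcJoint pX K x z *
          (Real.log (K (x t) (z t)) - Real.log (condDelay Q 1 t z (z t))) := by
      intro t x
      rw [resample x t (fun z => Real.log (K (x t) (z t))
        - Real.log (condDelay Q 1 t z (z t)))]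
      apply Finset.sum_congr rfl; intro z _
      simp only [Function.update_self, hqinv]
      rcases eq_or_lt_of_le (hdmc0 x z) with h0 | h0
      · rw [← h0, zero_mul, zero_mul]
      · congr 1
        simp only [hkldef]
        rw [klDiv]
        apply Finset.sum_congr rfl; intro b _
        rcases eq_or_lt_of_le (hK0 (x t) b) with hKb | hKb
        · rw [← hKb, zero_mul, zero_mul]
        · have hqb : 0 < condDelay Q 1 t z b := by
            rw [condDelay_eq_div]
            exact div_pos (hnumpos x z h0 t b hKb) (hdenpos x z h0 t)
          rw [Real.log_div (ne_of_gt hKb) (ne_of_gt hqb)]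
    calc ∑ t, ∑ x : Fin n → α, ∑ z : Fin n → α, dmcJoint pX K x z * kl t x z
        = ∑ t, ∑ x : Fin n → α, ∑ z : Fin n → α, dmcJoint pX K x z *
            (Real.log (K (x t) (z t)) - Real.log (condDelay Q 1 t z (z t))) :=
          Finset.sum_congr rfl fun t _ => Finset.sum_congr rfl fun x _ => hper t x
      _ = ∑ x : Fin n → α, ∑ z : Fin n → α, ∑ t, dmcJoint pX K x z *
            (Real.log (K (x t) (z t)) - Real.log (condDelay Q 1 t z (z t))) :=
          (swap3 _).symm
      _ = mutInfo pX K := by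
          rw [mutInfo]
          apply Finset.sum_congr rfl; intro x _
          apply Finset.sum_congr rfl; intro z _
          rw [← Finset.mul_sum]
          rcases eq_or_lt_of_le (hdmc0 x z) with h0 | h0
          · rw [← h0, zero_mul, zero_mul]
          · congr 1
            have hQzpos : 0 < Q z := lt_of_lt_of_le h0 (hdmc_le_Q x z)
            have hprodpos : (0:ℝ) < ∏ s, K (x s) (z s) :=
              Finset.prod_pos fun s _ => hKpos x z h0 s
            have h1 : dmcJoint pX K x z / (pX x * zMarg pX K z)
                = (∏ s, K (x s) (z s)) / Q z := by
              rw [dmcJoint, ← hQdef, mul_div_mul_left _ _ (ne_of_gt (hpXpos x z h0))]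
            rw [h1, Real.log_div (ne_of_gt hprodpos) (ne_of_gt hQzpos)]
            rw [Real.log_prod (fun s _ => ne_of_gt (hKpos x z h0 s))]
            rw [← condDelay_telescope Q hQ0 hQ1 z hQzpos]
            rw [Real.log_prod (fun s _ => ne_of_gt (hqpos x z h0 s))]
            rw [Finset.sum_sub_distrib]
  -- Step D : Cauchy–Schwarz
  have stepD : ∑ t, ∑ x : Fin n → α, ∑ z : Fin n → α,
        dmcJoint pX K x z * Real.sqrt (2 * kl t x z)
      ≤ Real.sqrt (n : ℝ) * Real.sqrt (2 * mutInfo pX K) := by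
    set w : Fin n × (Fin n → α) × (Fin n → α) → ℝ :=
      fun p => dmcJoint pX K p.2.1 p.2.2 with hw
    set aa : Fin n × (Fin n → α) × (Fin n → α) → ℝ :=
      fun p => 2 * kl p.1 p.2.1 p.2.2 with ha
    have hflat : ∀ (g : Fin n → (Fin n → α) → (Fin n → α) → ℝ),
        ∑ p : Fin n × (Fin n → α) × (Fin n → α), g p.1 p.2.1 p.2.2
          = ∑ t, ∑ x : Fin n → α, ∑ z : Fin n → α, g t x z := by
      intro g
      rw [Fintype.sum_prod_type]
      exact Finset.sum_congr rfl fun t _ => Fintype.sum_prod_type _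
    rw [← hflat (fun t x z => dmcJoint pX K x z * Real.sqrt (2 * kl t x z))]
    have hw0 : ∀ p, 0 ≤ w p := fun p => hdmc0 _ _
    have haw : ∀ p, 0 ≤ w p * max (aa p) 0 := fun p =>
      mul_nonneg (hw0 p) (le_max_right _ _)
    have hterm : ∀ p, w p * Real.sqrt (aa p)
        = Real.sqrt (w p) * Real.sqrt (w p * max (aa p) 0) := by
      intro p
      rcases eq_or_lt_of_le (hw0 p) with h0 | h0
      · rw [← h0]; simp
      · have hanneg : 0 ≤ aa p := by
          simp only [ha]
          have := hklnonneg p.1 p.2.1 p.2.2 h0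
          linarith
        rw [max_eq_left hanneg, Real.sqrt_mul (hw0 p)]
        have : Real.sqrt (w p) * (Real.sqrt (w p) * Real.sqrt (aa p))
            = (Real.sqrt (w p) * Real.sqrt (w p)) * Real.sqrt (aa p) := by ring
        rw [this, Real.mul_self_sqrt (hw0 p)]
    have hgoal : ∑ p : Fin n × (Fin n → α) × (Fin n → α), w p * Real.sqrt (aa p)
        = ∑ p, Real.sqrt (w p) * Real.sqrt (w p * max (aa p) 0) :=
      Finset.sum_congr rfl fun p _ => hterm p
    rw [show (∑ p : Fin n × (Fin n → α) × (Fin n → α),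
        dmcJoint pX K p.2.1 p.2.2 * Real.sqrt (2 * kl p.1 p.2.1 p.2.2))
      = ∑ p, w p * Real.sqrt (aa p) from rfl, hgoal]
    have hCS := Finset.sum_mul_sq_le_sq_mul_sq Finset.univ
      (fun p => Real.sqrt (w p)) (fun p => Real.sqrt (w p * max (aa p) 0))
    have h1 : ∑ p : Fin n × (Fin n → α) × (Fin n → α), Real.sqrt (w p) ^ 2 = (n : ℝ) := by
      rw [Finset.sum_congr rfl fun p _ => Real.sq_sqrt (hw0 p)]
      rw [show (∑ p : Fin n × (Fin n → α) × (Fin n → α), w p)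
        = ∑ p : Fin n × (Fin n → α) × (Fin n → α),
          (fun (t : Fin n) (x z : Fin n → α) => dmcJoint pX K x z) p.1 p.2.1 p.2.2 from rfl]
      rw [hflat (fun t x z => dmcJoint pX K x z)]
      rw [Finset.sum_congr rfl fun (t : Fin n) _ => hP1]
      simp
    have h2 : ∑ p : Fin n × (Fin n → α) × (Fin n → α),
        Real.sqrt (w p * max (aa p) 0) ^ 2 = 2 * mutInfo pX K := by
      rw [Finset.sum_congr rfl fun p _ => Real.sq_sqrt (haw p)]
      have hmax : ∀ p, w p * max (aa p) 0 = 2 * (w p * kl p.1 p.2.1 p.2.2) := by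
        intro p
        rcases eq_or_lt_of_le (hw0 p) with h0 | h0
        · rw [← h0, zero_mul, zero_mul, mul_zero]
        · have hk := hklnonneg p.1 p.2.1 p.2.2 h0
          rw [max_eq_left (by simp only [ha]; linarith : (0:ℝ) ≤ aa p)]
          simp only [ha]
          ring
      rw [Finset.sum_congr rfl fun p _ => hmax p, ← Finset.mul_sum]
      rw [show (∑ p : Fin n × (Fin n → α) × (Fin n → α), w p * kl p.1 p.2.1 p.2.2)
        = ∑ p : Fin n × (Fin n → α) × (Fin n → α),
          (fun (t : Fin n) (x z : Fin n → α) => dmcJoint pX K x z * kl t x z)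
            p.1 p.2.1 p.2.2 from rfl]
      rw [hflat (fun t x z => dmcJoint pX K x z * kl t x z), stepC]
    have hS0 : 0 ≤ ∑ p : Fin n × (Fin n → α) × (Fin n → α),
        Real.sqrt (w p) * Real.sqrt (w p * max (aa p) 0) :=
      Finset.sum_nonneg fun p _ => mul_nonneg (Real.sqrt_nonneg _) (Real.sqrt_nonneg _)
    rw [h1, h2] at hCS
    have := Real.sqrt_le_sqrt hCS
    rw [Real.sqrt_sq hS0] at this
    calc ∑ p : Fin n × (Fin n → α) × (Fin n → α),
          Real.sqrt (w p) * Real.sqrt (w p * max (aa p) 0)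
        ≤ Real.sqrt ((n : ℝ) * (2 * mutInfo pX K)) := this
      _ = Real.sqrt (n : ℝ) * Real.sqrt (2 * mutInfo pX K) :=
          Real.sqrt_mul (Nat.cast_nonneg n) _
  -- final assembly
  have hpull : ∑ t, ∑ x : Fin n → α, ∑ z : Fin n → α,
      dmcJoint pX K x z * (C * Real.sqrt (2 * kl t x z))
      = C * ∑ t, ∑ x : Fin n → α, ∑ z : Fin n → α,
        dmcJoint pX K x z * Real.sqrt (2 * kl t x z) := by
    calc ∑ t, ∑ x : Fin n → α, ∑ z : Fin n → α,
          dmcJoint pX K x z * (C * Real.sqrt (2 * kl t x z))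
        = ∑ t, ∑ x : Fin n → α, ∑ z : Fin n → α,
            C * (dmcJoint pX K x z * Real.sqrt (2 * kl t x z)) := by
          apply Finset.sum_congr rfl; intro t _
          apply Finset.sum_congr rfl; intro x _
          exact Finset.sum_congr rfl fun z _ => by ring
      _ = C * ∑ t, ∑ x : Fin n → α, ∑ z : Fin n → α,
            dmcJoint pX K x z * Real.sqrt (2 * kl t x z) := pull3 _ _
  have hn0 : (0:ℝ) < n := by exact_mod_cast hn
  have hfinal : (n : ℝ)⁻¹ * (C * (Real.sqrt (n : ℝ) * Real.sqrt (2 * mutInfo pX K)))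
      = Real.sqrt 2 * matMaxAbs (K⁻¹)ᵀ * (Fintype.card α : ℝ) * Λmax *
        Real.sqrt ((n : ℝ)⁻¹ * mutInfo pX K) := by
    rw [Real.sqrt_mul (by norm_num : (0:ℝ) ≤ 2) (mutInfo pX K)]
    rw [Real.sqrt_mul (inv_nonneg.2 (le_of_lt hn0)) (mutInfo pX K)]
    rw [Real.sqrt_inv]
    have hid : (n : ℝ)⁻¹ * Real.sqrt (n : ℝ) = (Real.sqrt (n : ℝ))⁻¹ := by
      have h2 : Real.sqrt (n : ℝ) * Real.sqrt (n : ℝ) = (n : ℝ) :=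
        Real.mul_self_sqrt (le_of_lt hn0)
      have hs0 : Real.sqrt (n : ℝ) ≠ 0 := by
        intro hcon
        rw [hcon, mul_zero] at h2
        exact ne_of_gt hn0 h2.symm
      field_simp
      exact Real.sq_sqrt (le_of_lt hn0)
    rw [hCdef]
    calc (n : ℝ)⁻¹ * (Λmax * (Fintype.card α : ℝ) * matMaxAbs (K⁻¹)ᵀ *
          (Real.sqrt (n : ℝ) * (Real.sqrt 2 * Real.sqrt (mutInfo pX K))))
        = ((n : ℝ)⁻¹ * Real.sqrt (n : ℝ)) * (Λmax * (Fintype.card α : ℝ) *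
            matMaxAbs (K⁻¹)ᵀ * (Real.sqrt 2 * Real.sqrt (mutInfo pX K))) := by ring
      _ = (Real.sqrt (n : ℝ))⁻¹ * (Λmax * (Fintype.card α : ℝ) *
            matMaxAbs (K⁻¹)ᵀ * (Real.sqrt 2 * Real.sqrt (mutInfo pX K))) := by rw [hid]
      _ = Real.sqrt 2 * matMaxAbs (K⁻¹)ᵀ * (Fintype.card α : ℝ) * Λmax *
            ((Real.sqrt (n : ℝ))⁻¹ * Real.sqrt (mutInfo pX K)) := by ring
  calc ∑ x : Fin n → α, ∑ z : Fin n → α, dmcJoint pX K x z *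
        ((n : ℝ)⁻¹ * ∑ t, Λ (x t) (hadFilter K XB (condDelay Q 1 t z) (z t)))
      = (n : ℝ)⁻¹ * ∑ t, ∑ x : Fin n → α, ∑ z : Fin n → α, dmcJoint pX K x z *
          Λ (x t) (hadFilter K XB (condDelay Q 1 t z) (z t)) := stepA
    _ ≤ (n : ℝ)⁻¹ * ∑ t, ∑ x : Fin n → α, ∑ z : Fin n → α, dmcJoint pX K x z *
          (C * Real.sqrt (2 * kl t x z)) := by
        apply mul_le_mul_of_nonneg_left _ (inv_nonneg.2 (Nat.cast_nonneg n))
        exact Finset.sum_le_sum fun t _ => stepB t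
    _ = (n : ℝ)⁻¹ * (C * ∑ t, ∑ x : Fin n → α, ∑ z : Fin n → α,
          dmcJoint pX K x z * Real.sqrt (2 * kl t x z)) := by rw [hpull]
    _ ≤ (n : ℝ)⁻¹ * (C * (Real.sqrt (n : ℝ) * Real.sqrt (2 * mutInfo pX K))) := by
        apply mul_le_mul_of_nonneg_left _ (inv_nonneg.2 (Nat.cast_nonneg n))
        exact mul_le_mul_of_nonneg_left stepD hC0
    _ = Real.sqrt 2 * matMaxAbs (K⁻¹)ᵀ * (Fintype.card α : ℝ) * Λmax *
          Real.sqrt ((n : ℝ)⁻¹ * mutInfo pX K) := hfinal
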